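/- CNF-SAT encoding correctness: let assignments α: {x₁,…,x_n} → {0,1} be encoded as words w_α = b a^{α(x₁)} b a^{α(x₂)} ⋯ b a^{α(x_n)} over {a,b}. Then for any i ∈ [1,n], α(x_i) = 1 if and only if b^i a b^{n−i} ⊑ w_α. -/
import Mathlib

/-- The encoding `w_α = b a^{α(x₁)} b a^{α(x₂)} ⋯ b a^{α(x_n)}` of an assignment
`α : Fin n → ℕ` with values in `{0,1}`. -/
def encodeAssignment {A : Type*} (a b : A) (n : ℕ) (α : Fin n → ℕ) : List A :=
  (List.ofFn fun i : Fin n => b :: List.replicate (α i) a).flatten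

section Aux
variable {A : Type*} (a b : A)

lemma encode_zero (α : Fin 0 → ℕ) : encodeAssignment a b 0 α = [] := by
  simp [encodeAssignment]

lemma encode_succ (n : ℕ) (α : Fin (n+1) → ℕ) :
    encodeAssignment a b (n+1) α
      = (b :: List.replicate (α 0) a) ++ encodeAssignment a b n (fun j => α j.succ) := by
  rw [encodeAssignment, List.ofFn_succ, List.flatten_cons]; rfl

lemma encode_count [DecidableEq A] (hab : a ≠ b) : ∀ (n : ℕ) (α : Fin n → ℕ),
    (encodeAssignment a b n α).count b = n := by
  intro n
  induction n with
  | zero => intro α; simp [encode_zero]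
  | succ n ih =>
    intro α
    rw [encode_succ]
    simp [List.count_append, List.count_replicate, hab, ih]

lemma rep_sublist : ∀ (n : ℕ) (α : Fin n → ℕ),
    (List.replicate n b).Sublist (encodeAssignment a b n α) := by
  intro n
  induction n with
  | zero => intro α; simp
  | succ n ih =>
    intro α
    rw [encode_succ, List.replicate_succ]
    exact List.cons_sublist_cons.mpr ((ih _).trans (List.sublist_append_right _ _))

lemma forward_dir : ∀ (n : ℕ) (α : Fin n → ℕ) (i : Fin n), α i = 1 →
    (List.replicate (i.val + 1) b ++ [a] ++ List.replicate (n - (i.val + 1)) b).Sublist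
      (encodeAssignment a b n α) := by
  intro n
  induction n with
  | zero => exact fun α i => i.elim0
  | succ n ih =>
    intro α i hi
    rw [encode_succ]
    rcases Fin.eq_zero_or_eq_succ i with rfl | ⟨j, rfl⟩
    · rw [hi]
      simp only [Fin.val_zero, Nat.zero_add, Nat.add_sub_cancel, List.replicate_one]
      have : (b :: a :: List.replicate n b).Sublist
          (b :: a :: encodeAssignment a b n (fun j => α j.succ)) :=
        List.cons_sublist_cons.mpr (List.cons_sublist_cons.mpr (rep_sublist a b n _))
      simpa using this
    · have hj : (fun k => α (Fin.succ k)) j = 1 := hi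
      have h2 := ih (fun k => α k.succ) j hj
      have he : j.succ.val + 1 = (j.val + 1) + 1 := by simp
      rw [he]
      have he2 : n + 1 - (j.val + 1 + 1) = n - (j.val + 1) := by omega
      rw [he2, List.replicate_succ]
      simp only [List.cons_append]
      exact List.cons_sublist_cons.mpr (h2.trans (List.sublist_append_right _ _))

lemma split_lemma [DecidableEq A] (hab : a ≠ b) : ∀ (n : ℕ) (α : Fin n → ℕ), (∀ i, α i ≤ 1) →
    ∀ x y : List A, encodeAssignment a b n α = x ++ a :: y →
    ∃ j : Fin n, α j = 1 ∧ x.count b = j.val + 1 := by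
  intro n
  induction n with
  | zero =>
    intro α _ x y h
    rw [encode_zero] at h
    exact absurd h (by simp)
  | succ n ih =>
    intro α hα x y h
    rw [encode_succ] at h
    match x with
    | [] =>
      simp only [List.nil_append] at h
      rcases Nat.le_one_iff_eq_zero_or_eq_one.mp (hα 0) with h0 | h0 <;>
        rw [h0] at h <;> simp only [List.cons_append, List.replicate,
          List.nil_append, List.singleton_append] at h
      · exact absurd (List.head_eq_of_cons_eq h).symm hab
      · exact absurd (List.head_eq_of_cons_eq h).symm hab
    | c :: x' =>
      simp only [List.cons_append] at h
      have hc : b = c := List.head_eq_of_cons_eq h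
      subst hc
      have h' : List.replicate (α 0) a ++ encodeAssignment a b n (fun j => α j.succ)
          = x' ++ a :: y := List.tail_eq_of_cons_eq h
      rcases Nat.le_one_iff_eq_zero_or_eq_one.mp (hα 0) with h0 | h0
      · rw [h0] at h'
        simp only [List.replicate_zero, List.nil_append] at h'
        obtain ⟨j, hj1, hj2⟩ := ih _ (fun k => hα k.succ) x' y h'
        refine ⟨j.succ, hj1, ?_⟩
        simp [List.count_cons, hj2]
      · rw [h0] at h'
        simp only [List.replicate_one, List.singleton_append] at h'
        match x' with
        | [] => exact ⟨0, h0, by simp⟩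
        | d :: x'' =>
          simp only [List.cons_append] at h'
          have hd : a = d := List.head_eq_of_cons_eq h'
          subst hd
          have h'' : encodeAssignment a b n (fun j => α j.succ) = x'' ++ a :: y :=
            List.tail_eq_of_cons_eq h'
          obtain ⟨j, hj1, hj2⟩ := ih _ (fun k => hα k.succ) x'' y h''
          refine ⟨j.succ, hj1, ?_⟩
          simp [List.count_cons, hj2, hab]

end Aux

theorem cnf_sat_encoding_correct {A : Type*} (a b : A) (hab : a ≠ b)
    (n : ℕ) (α : Fin n → ℕ) (hα : ∀ i, α i ≤ 1) (i : Fin n) :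
    α i = 1 ↔
      (List.replicate (i.val + 1) b ++ [a] ++ List.replicate (n - (i.val + 1)) b).Sublist
        (encodeAssignment a b n α) := by
  classical
  constructor
  · exact forward_dir a b n α i
  · intro h
    obtain ⟨w1, w2, hw, h1, h2⟩ := List.append_sublist_iff.mp h
    obtain ⟨u, v, hu, hu1, hu2⟩ := List.append_sublist_iff.mp h1
    have hav : a ∈ v := hu2.mem (by simp)
    obtain ⟨v1, v2, rfl⟩ := List.mem_iff_append.mp hav
    have hx : encodeAssignment a b n α = (u ++ v1) ++ a :: (v2 ++ w2) := by
      rw [hw, hu]; simp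
    obtain ⟨j, hj1, hj2⟩ := split_lemma a b hab n α hα _ _ hx
    -- counts
    have hcu : i.val + 1 ≤ u.count b := by
      have := hu1.count_le b
      simpa using this
    have hcw2 : n - (i.val + 1) ≤ w2.count b := by
      have := h2.count_le b
      simpa using this
    have htot := encode_count a b hab n α
    rw [hx] at htot
    simp only [List.count_append, List.count_cons] at htot
    have hib : i.val + 1 ≤ n := i.isLt
    have : j.val = i.val := by
      have hj2' : u.count b + v1.count b = j.val + 1 := by
        simpa [List.count_append] using hj2
      have hne : (a == b) = false := by simp [hab]
      rw [hne] at htot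
      omega
    rw [← hj1]
    congr 1
    exact Fin.ext this.symm
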